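/- Let m, n be natural numbers with m ≥ 4 and n ≥ 4, and let a be a real number with a > 4. Let 𝒯 ⊆ M_{m×n}(ℂ) be the complex linear span of the matrices T_{i,j}, for 2 ≤ i ≤ m−2 and 2 ≤ j ≤ n−2, where T_{i,j} is the m×n matrix whose only nonzero entries are: entry (i−2, j+1) equal to 1, entry (i−1, j) equal to a+1, entry (i, j−1) equal to a+1, and entry (i+1, j−2) equal to 1 (rows indexed 0,…,m−1, columns indexed 0,…,n−1). Then every nonzero matrix in 𝒯 has rank at least 4, and the dimension of 𝒯 over ℂ equals (m−3)(n−3). -/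

import Mathlib

open Polynomial

noncomputable def DD (G : ℝ[X]) : ℝ[X] :=
  X * derivative G - C (G.natTrailingDegree : ℝ) * G

lemma DD_coeff (G : ℝ[X]) (e : ℕ) :
    (DD G).coeff e = ((e : ℝ) - G.natTrailingDegree) * G.coeff e := by
  rcases e with _ | e
  · simp [DD, mul_coeff_zero]
  · simp [DD, coeff_X_mul, coeff_derivative]
    ring

lemma DD_support (G : ℝ[X]) :
    (DD G).support = G.support.erase G.natTrailingDegree := by
  ext e
  simp only [mem_support_iff, DD_coeff, Finset.mem_erase, mem_support_iff, mul_ne_zero_iff]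
  constructor
  · rintro ⟨h1, h2⟩
    refine ⟨?_, h2⟩
    intro he; rw [he] at h1; simp at h1
  · rintro ⟨h1, h2⟩
    refine ⟨?_, h2⟩
    have : G.natTrailingDegree ≤ e := natTrailingDegree_le_of_ne_zero h2
    have : G.natTrailingDegree < e := lt_of_le_of_ne this (Ne.symm h1)
    have : (G.natTrailingDegree : ℝ) < e := by exact_mod_cast this
    linarith

lemma DD_root (G : ℝ[X]) {x y : ℝ} (hxy : x < y) (hy : y < 0)
    (hx0 : G.eval x = 0) (hy0 : G.eval y = 0) :
    ∃ z, x < z ∧ z < y ∧ (DD G).eval z = 0 := by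
  set t : ℤ := (G.natTrailingDegree : ℤ)
  set f : ℝ → ℝ := fun s => G.eval s * s ^ (-t)
  set f' : ℝ → ℝ := fun s => (DD G).eval s * s ^ (-t - 1)
  have hne : ∀ s : ℝ, s < 0 → s ≠ 0 := fun s hs => ne_of_lt hs
  have hder : ∀ s : ℝ, s ≠ 0 → HasDerivAt f (f' s) s := by
    intro s hs
    have h1 : HasDerivAt (fun u => G.eval u) (G.derivative.eval s) s := G.hasDerivAt s
    have h2 : HasDerivAt (fun u : ℝ => u ^ (-t)) (((-t : ℤ) : ℝ) * s ^ (-t - 1)) s :=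
      hasDerivAt_zpow (-t) s (Or.inl hs)
    have := h1.mul h2
    refine HasDerivAt.congr_deriv (f := f) this ?_
    simp only [f', DD, eval_sub, eval_mul, eval_X, eval_C]
    have hs1 : s ^ (-t) = s * s ^ (-t - 1) := by
      rw [← zpow_one_add₀ hs]; ring_nf
    rw [hs1]; push_cast [t]; ring
  have hcont : ContinuousOn f (Set.Icc x y) := by
    intro s hs
    have hsne : s ≠ 0 := hne s (lt_of_le_of_lt hs.2 hy)
    exact ((hder s hsne).continuousAt).continuousWithinAt
  have hfI : f x = f y := by simp [f, hx0, hy0]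
  have hder' : ∀ s ∈ Set.Ioo x y, HasDerivAt f (f' s) s := by
    intro s hs
    exact hder s (hne s (lt_trans hs.2 hy))
  obtain ⟨c, hc, hc0⟩ := exists_hasDerivAt_eq_zero hxy hcont hfI hder'
  refine ⟨c, hc.1, hc.2, ?_⟩
  have hcne : c ≠ 0 := hne c (lt_trans hc.2 hy)
  have : (DD G).eval c * c ^ (-t - 1) = 0 := hc0
  rcases mul_eq_zero.mp this with h | h
  · exact h
  · exact absurd h (zpow_ne_zero _ hcne)

lemma two_le_card_of_root (G : ℝ[X]) (hG : G ≠ 0) {y : ℝ} (hy : y ≠ 0)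
    (h0 : G.eval y = 0) : 2 ≤ G.support.card := by
  by_contra h
  push_neg at h
  interval_cases hc : G.support.card
  · exact hG (by simpa using Finset.card_eq_zero.mp hc)
  · obtain ⟨k, x, hx, rfl⟩ := card_support_eq_one.mp hc
    simp only [eval_mul, eval_C, eval_pow, eval_X] at h0
    exact hx (by simpa [pow_ne_zero _ hy] using h0)

lemma four_le_card_of_roots (G : ℝ[X]) (hG : G ≠ 0) {y₁ y₂ y₃ : ℝ}
    (h12 : y₁ < y₂) (h23 : y₂ < y₃) (h30 : y₃ < 0)
    (e1 : G.eval y₁ = 0) (e2 : G.eval y₂ = 0) (e3 : G.eval y₃ = 0) :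
    4 ≤ G.support.card := by
  have h20 : y₂ < 0 := lt_trans h23 h30
  have h10 : y₁ < 0 := lt_trans h12 h20
  obtain ⟨z₁, hz11, hz12, hz1⟩ := DD_root G h12 h20 e1 e2
  obtain ⟨z₂, hz21, hz22, hz2⟩ := DD_root G h23 h30 e2 e3
  have hz10 : z₁ < 0 := lt_trans hz12 h20
  have hz20 : z₂ < 0 := lt_trans hz22 h30
  have hzz : z₁ < z₂ := lt_trans hz12 hz21
  have hG1 : DD G ≠ 0 := by
    intro h
    have := two_le_card_of_root G hG (ne_of_lt h10) e1
    have hsupp := DD_support G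
    rw [h] at hsupp
    have : G.support.card - 1 ≤ 0 := by
      rw [← Finset.card_erase_of_mem (natTrailingDegree_mem_support_of_nonzero hG), ← hsupp]
      simp
    omega
  obtain ⟨w, hw1, hw2, hw⟩ := DD_root (DD G) hzz hz20 hz1 hz2
  have hw0 : w < 0 := lt_trans hw2 hz20
  have hG2 : DD (DD G) ≠ 0 := by
    intro h
    have := two_le_card_of_root (DD G) hG1 (ne_of_lt hz10) hz1
    have hsupp := DD_support (DD G)
    rw [h] at hsupp
    have : (DD G).support.card - 1 ≤ 0 := by
      rw [← Finset.card_erase_of_mem (natTrailingDegree_mem_support_of_nonzero hG1), ← hsupp]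
      simp
    omega
  have c2 : 2 ≤ (DD (DD G)).support.card :=
    two_le_card_of_root _ hG2 (ne_of_lt hw0) hw
  have e1' : (DD (DD G)).support.card = (DD G).support.card - 1 := by
    rw [DD_support, Finset.card_erase_of_mem (natTrailingDegree_mem_support_of_nonzero hG1)]
  have e2' : (DD G).support.card = G.support.card - 1 := by
    rw [DD_support, Finset.card_erase_of_mem (natTrailingDegree_mem_support_of_nonzero hG)]
  omega

noncomputable def rePoly (F : ℂ[X]) : ℝ[X] :=
  ⟨.ofCoeff (F.toFinsupp.coeff.mapRange Complex.re Complex.zero_re)⟩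

noncomputable def imPoly (F : ℂ[X]) : ℝ[X] :=
  ⟨.ofCoeff (F.toFinsupp.coeff.mapRange Complex.im Complex.zero_im)⟩

lemma rePoly_coeff (F : ℂ[X]) (e : ℕ) : (rePoly F).coeff e = (F.coeff e).re := by
  rcases F with ⟨f⟩
  simp [rePoly, coeff]

lemma imPoly_coeff (F : ℂ[X]) (e : ℕ) : (imPoly F).coeff e = (F.coeff e).im := by
  rcases F with ⟨f⟩
  simp [imPoly, coeff]

lemma rePoly_eval (F : ℂ[X]) (x : ℝ) : (rePoly F).eval x = (F.eval (x : ℂ)).re := by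
  have hb : (rePoly F).natDegree < F.natDegree + 1 := by
    have : (rePoly F).natDegree ≤ F.natDegree := by
      apply natDegree_le_iff_coeff_eq_zero.mpr
      intro k hk
      rw [rePoly_coeff, coeff_eq_zero_of_natDegree_lt hk, Complex.zero_re]
    omega
  rw [eval_eq_sum_range' hb, eval_eq_sum_range' (Nat.lt_succ_self F.natDegree)]
  rw [Complex.re_sum]
  apply Finset.sum_congr rfl
  intro i _
  rw [rePoly_coeff]
  have : ((x : ℂ)) ^ i = ((x ^ i : ℝ) : ℂ) := by push_cast; ring
  simp [Complex.mul_re, ← Complex.ofReal_pow]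

lemma imPoly_eval (F : ℂ[X]) (x : ℝ) : (imPoly F).eval x = (F.eval (x : ℂ)).im := by
  have hb : (imPoly F).natDegree < F.natDegree + 1 := by
    have : (imPoly F).natDegree ≤ F.natDegree := by
      apply natDegree_le_iff_coeff_eq_zero.mpr
      intro k hk
      rw [imPoly_coeff, coeff_eq_zero_of_natDegree_lt hk, Complex.zero_im]
    omega
  rw [eval_eq_sum_range' hb, eval_eq_sum_range' (Nat.lt_succ_self F.natDegree)]
  rw [Complex.im_sum]
  apply Finset.sum_congr rfl
  intro i _
  rw [imPoly_coeff]
  have : ((x : ℂ)) ^ i = ((x ^ i : ℝ) : ℂ) := by push_cast; ring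
  simp [Complex.mul_im, ← Complex.ofReal_pow]

lemma four_le_card_complex (F : ℂ[X]) (hF : F ≠ 0) {y₁ y₂ y₃ : ℝ}
    (h12 : y₁ < y₂) (h23 : y₂ < y₃) (h30 : y₃ < 0)
    (e1 : F.eval (y₁ : ℂ) = 0) (e2 : F.eval (y₂ : ℂ) = 0) (e3 : F.eval (y₃ : ℂ) = 0) :
    4 ≤ F.support.card := by
  by_cases hre : rePoly F = 0
  · have him : imPoly F ≠ 0 := by
      intro him
      apply hF
      ext e
      have h1 : (F.coeff e).re = 0 := by rw [← rePoly_coeff, hre]; simp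
      have h2 : (F.coeff e).im = 0 := by rw [← imPoly_coeff, him]; simp
      simp [Complex.ext_iff, h1, h2]
    have hcard := four_le_card_of_roots (imPoly F) him h12 h23 h30
      (by rw [imPoly_eval, e1]; simp) (by rw [imPoly_eval, e2]; simp)
      (by rw [imPoly_eval, e3]; simp)
    refine le_trans hcard (Finset.card_le_card ?_)
    intro e he
    rw [mem_support_iff] at he ⊢
    intro h0
    rw [imPoly_coeff, h0] at he
    simp at he
  · have hcard := four_le_card_of_roots (rePoly F) hre h12 h23 h30
      (by rw [rePoly_eval, e1]; simp) (by rw [rePoly_eval, e2]; simp)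
      (by rw [rePoly_eval, e3]; simp)
    refine le_trans hcard (Finset.card_le_card ?_)
    intro e he
    rw [mem_support_iff] at he ⊢
    intro h0
    rw [rePoly_coeff, h0] at he
    simp at he

noncomputable def Qpoly (a : ℝ) : ℂ[X] :=
  C 1 + C ((a : ℂ) + 1) * X + C ((a : ℂ) + 1) * X ^ 2 + X ^ 3

lemma Qpoly_coeff (a : ℝ) (k : ℕ) :
    (Qpoly a).coeff k =
      if k = 0 then 1 else if k = 1 then (a : ℂ) + 1 else if k = 2 then (a : ℂ) + 1
        else if k = 3 then 1 else 0 := by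
  match k with
  | 0 => simp [Qpoly, coeff_add, coeff_C_mul, coeff_X_pow, coeff_one, coeff_X, -map_add]
  | 1 => simp [Qpoly, coeff_add, coeff_C_mul, coeff_X_pow, coeff_one, coeff_X, -map_add]
  | 2 => simp [Qpoly, coeff_add, coeff_C_mul, coeff_X_pow, coeff_one, coeff_X, -map_add]
  | 3 => simp [Qpoly, coeff_add, coeff_C_mul, coeff_X_pow, coeff_one, coeff_X, -map_add]
  | (k+4) => simp [Qpoly, coeff_add, coeff_C_mul, coeff_X_pow, coeff_one, coeff_X, coeff_C, -map_add]

lemma Qpoly_ne_zero (a : ℝ) : Qpoly a ≠ 0 := by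
  intro h
  have := Qpoly_coeff a 3
  rw [h] at this
  simp at this

lemma keyA (a : ℝ) (ha : 4 < a) (P : ℂ[X]) (hP : P ≠ 0) :
    4 ≤ (P * Qpoly a).support.card := by
  set s := Real.sqrt (a ^ 2 - 4) with hs
  have hs0 : 0 ≤ s := Real.sqrt_nonneg _
  have hs2 : s ^ 2 = a ^ 2 - 4 := Real.sq_sqrt (by nlinarith)
  set r := (a + s) / 2 with hrdef
  have hr1 : 1 < r := by
    have : 2 < a / 2 := by linarith
    have : a / 2 ≤ r := by rw [hrdef]; linarith
    linarith
  have hrpos : 0 < r := by linarith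
  have hrne : r ≠ 0 := ne_of_gt hrpos
  have hr0 : r ^ 2 - a * r + 1 = 0 := by
    rw [hrdef]; linear_combination hs2 / 4
  clear_value s r
  have hrinv : (r⁻¹) ^ 2 - a * r⁻¹ + 1 = 0 := by
    have h : (r⁻¹) ^ 2 - a * r⁻¹ + 1 = (r ^ 2 - a * r + 1) / r ^ 2 := by
      field_simp; ring
    rw [h, hr0, zero_div]
  -- evaluations
  have hQ1 : (Qpoly a).eval ((-1 : ℝ) : ℂ) = 0 := by
    simp [Qpoly]
    push_cast
    ring
  have key : ∀ u : ℝ, u ^ 2 - a * u + 1 = 0 → (Qpoly a).eval ((-u : ℝ) : ℂ) = 0 := by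
    intro u hu
    have : (Qpoly a).eval ((-u : ℝ) : ℂ) = ((1 - (a + 1) * u + (a + 1) * u ^ 2 - u ^ 3 : ℝ) : ℂ) := by
      simp [Qpoly]
      push_cast
      ring
    rw [this]
    have : (1 - (a + 1) * u + (a + 1) * u ^ 2 - u ^ 3 : ℝ) = 0 := by
      linear_combination (1 - u) * hu
    rw [this]; simp
  have hQr : (Qpoly a).eval ((-r : ℝ) : ℂ) = 0 := key r hr0
  have hQri : (Qpoly a).eval ((-r⁻¹ : ℝ) : ℂ) = 0 := key r⁻¹ hrinv
  have hF : P * Qpoly a ≠ 0 := mul_ne_zero hP (Qpoly_ne_zero a)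
  have hinv1 : r⁻¹ < 1 := by
    rw [inv_lt_one_iff₀]; right; exact hr1
  have hinvpos : 0 < r⁻¹ := by positivity
  exact four_le_card_complex _ hF (y₁ := -r) (y₂ := -1) (y₃ := -r⁻¹)
    (by linarith) (by linarith) (by linarith)
    (by rw [eval_mul, hQr]; ring) (by rw [eval_mul, hQ1]; ring)
    (by rw [eval_mul, hQri]; ring)

/-- The generator matrix `T_{i,j}` (rows indexed `0,…,m-1`, columns `0,…,n-1`):
its only nonzero entries are `(i-2, j+1) ↦ 1`, `(i-1, j) ↦ a+1`, `(i, j-1) ↦ a+1`,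
`(i+1, j-2) ↦ 1`. -/
def Tgen (m n : ℕ) (a : ℝ) (i j : ℕ) : Matrix (Fin m) (Fin n) ℂ :=
  Matrix.of fun r c =>
    if (r : ℕ) = i - 2 ∧ (c : ℕ) = j + 1 then 1
    else if (r : ℕ) = i - 1 ∧ (c : ℕ) = j then (a : ℂ) + 1
    else if (r : ℕ) = i ∧ (c : ℕ) = j - 1 then (a : ℂ) + 1
    else if (r : ℕ) = i + 1 ∧ (c : ℕ) = j - 2 then 1
    else 0

lemma Tgen_low {m n : ℕ} {a : ℝ} {i j : ℕ} (hi : 2 ≤ i) (hj : 2 ≤ j)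
    (r : Fin m) (c : Fin n) (h : (r : ℕ) + (c : ℕ) + 1 < i + j) :
    Tgen m n a i j r c = 0 := by
  have h1 : ¬((r : ℕ) = i - 2 ∧ (c : ℕ) = j + 1) := by omega
  have h2 : ¬((r : ℕ) = i - 1 ∧ (c : ℕ) = j) := by omega
  have h3 : ¬((r : ℕ) = i ∧ (c : ℕ) = j - 1) := by omega
  have h4 : ¬((r : ℕ) = i + 1 ∧ (c : ℕ) = j - 2) := by omega
  simp only [Tgen, Matrix.of_apply, if_neg h1, if_neg h2, if_neg h3, if_neg h4]

lemma Tgen_diag {m n : ℕ} {a : ℝ} {i j : ℕ} (hi : 2 ≤ i) (hj : 2 ≤ j)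
    (r : Fin m) (c : Fin n) (h : (r : ℕ) + (c : ℕ) + 1 = i + j) :
    Tgen m n a i j r c =
      if i ≤ (r : ℕ) + 2 then (Qpoly a).coeff ((r : ℕ) + 2 - i) else 0 := by
  simp only [Tgen, Matrix.of_apply]
  have hcases : (r : ℕ) + 2 < i ∨ (r : ℕ) = i - 2 ∨ (r : ℕ) = i - 1 ∨ (r : ℕ) = i ∨
      (r : ℕ) = i + 1 ∨ (r : ℕ) ≥ i + 2 := by omega
  rcases hcases with hc | hc | hc | hc | hc | hc
  · rw [if_neg (by omega), if_neg (by omega), if_neg (by omega), if_neg (by omega),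
      if_neg (by omega)]
  · have hcc : (c : ℕ) = j + 1 := by omega
    rw [if_pos ⟨hc, hcc⟩, if_pos (by omega)]
    have he : (r : ℕ) + 2 - i = 0 := by omega
    rw [he, Qpoly_coeff]; norm_num
  · have hcc : (c : ℕ) = j := by omega
    rw [if_neg (by omega), if_pos ⟨hc, hcc⟩, if_pos (by omega)]
    have he : (r : ℕ) + 2 - i = 1 := by omega
    rw [he, Qpoly_coeff]; norm_num
  · have hcc : (c : ℕ) = j - 1 := by omega
    rw [if_neg (by omega), if_neg (by omega), if_pos ⟨hc, hcc⟩, if_pos (by omega)]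
    have he : (r : ℕ) + 2 - i = 2 := by omega
    rw [he, Qpoly_coeff]; norm_num
  · have hcc : (c : ℕ) = j - 2 := by omega
    rw [if_neg (by omega), if_neg (by omega), if_neg (by omega), if_pos ⟨hc, hcc⟩,
      if_pos (by omega)]
    have he : (r : ℕ) + 2 - i = 3 := by omega
    rw [he, Qpoly_coeff]; norm_num
  · rw [if_neg (by omega), if_neg (by omega), if_neg (by omega), if_neg (by omega),
      if_pos (by omega), Qpoly_coeff]
    rw [if_neg (by omega), if_neg (by omega), if_neg (by omega), if_neg (by omega)]

lemma det4_isUnit (A : Matrix (Fin 4) (Fin 4) ℂ)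
    (hz : ∀ k k' : Fin 4, k < k' → A k k' = 0)
    (hd : ∀ k : Fin 4, A k k ≠ 0) : IsUnit A.det := by
  have z01 := hz 0 1 (by decide)
  have z02 := hz 0 2 (by decide)
  have z03 := hz 0 3 (by decide)
  have z12 := hz 1 2 (by decide)
  have z13 := hz 1 3 (by decide)
  have z23 := hz 2 3 (by decide)
  apply isUnit_iff_ne_zero.mpr
  have hbt : A.BlockTriangular OrderDual.toDual := by
    intro i j hij
    exact hz i j hij
  rw [Matrix.det_of_lowerTriangular A hbt]
  apply Finset.prod_ne_zero_iff.mpr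
  intro k _
  exact hd k



lemma core (m n : ℕ) (hm : 4 ≤ m) (hn : 4 ≤ n) (a : ℝ) (ha : 4 < a)
    (l : (ℕ × ℕ) →₀ ℂ)
    (hl : ∀ p ∈ l.support, 2 ≤ p.1 ∧ p.1 ≤ m - 2 ∧ 2 ≤ p.2 ∧ p.2 ≤ n - 2)
    (hl0 : l ≠ 0) :
    ∃ (v : Fin 4 → Fin m) (w : Fin 4 → Fin n),
      IsUnit (((Finsupp.linearCombination ℂ
        (fun p : ℕ × ℕ => Tgen m n a p.1 p.2)) l).submatrix v w).det := by
  set g : ℕ × ℕ → Matrix (Fin m) (Fin n) ℂ := fun p => Tgen m n a p.1 p.2 with hg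
  set M : Matrix (Fin m) (Fin n) ℂ := Finsupp.linearCombination ℂ g l with hMdef
  have hMentry : ∀ (r : Fin m) (c : Fin n),
      M r c = ∑ p ∈ l.support, l p * g p r c := by
    intro r c
    rw [hMdef, Finsupp.linearCombination_apply, Finsupp.sum, Matrix.sum_apply]
    apply Finset.sum_congr rfl
    intro p _
    simp
  have hsupp_ne : l.support.Nonempty := Finsupp.support_nonempty_iff.mpr hl0
  have himg_ne : (l.support.image fun p => p.1 + p.2).Nonempty := hsupp_ne.image _
  set σ : ℕ := (l.support.image fun p => p.1 + p.2).min' himg_ne with hσdef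
  have hσmem := (l.support.image fun p => p.1 + p.2).min'_mem himg_ne
  rw [Finset.mem_image] at hσmem
  obtain ⟨p₀, hp₀, hp₀σ⟩ := hσmem
  have hσle : ∀ p ∈ l.support, σ ≤ p.1 + p.2 := fun p hp =>
    Finset.min'_le _ _ (Finset.mem_image_of_mem _ hp)
  have hσ4 : 4 ≤ σ := by
    have := hl p₀ hp₀
    omega
  set T : Finset (ℕ × ℕ) := l.support.filter (fun p => p.1 + p.2 = σ) with hT
  have hTsub : T ⊆ l.support := Finset.filter_subset _ _
  have hTmem : ∀ p ∈ T, p ∈ l.support ∧ p.1 + p.2 = σ := by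
    intro p hp
    rw [hT, Finset.mem_filter] at hp
    exact hp
  set P : ℂ[X] := ∑ p ∈ T, C (l p) * X ^ p.1 with hP
  have hPcoeff : ∀ p ∈ T, P.coeff p.1 = l p := by
    intro p hp
    rw [hP, finset_sum_coeff]
    rw [Finset.sum_eq_single p]
    · simp [coeff_C_mul, coeff_X_pow]
    · intro q hq hqp
      have hq1 : q.1 ≠ p.1 := by
        intro he
        apply hqp
        have h1 := (hTmem q hq).2
        have h2 := (hTmem p hp).2
        have : q.2 = p.2 := by omega
        exact Prod.ext he this
      simp [coeff_C_mul, coeff_X_pow, Ne.symm hq1]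
    · intro hnot
      exact absurd hp hnot
  have hPsupp : ∀ k, P.coeff k ≠ 0 → ∃ p ∈ T, p.1 = k := by
    intro k hk
    by_contra hcon
    push_neg at hcon
    apply hk
    rw [hP, finset_sum_coeff]
    apply Finset.sum_eq_zero
    intro q hq
    rw [coeff_C_mul, coeff_X_pow, if_neg (fun h => (hcon q hq) h.symm), mul_zero]
  have hp₀T : p₀ ∈ T := by
    rw [hT, Finset.mem_filter]; exact ⟨hp₀, hp₀σ⟩
  have hP0 : P ≠ 0 := by
    intro h
    have := hPcoeff p₀ hp₀T
    rw [h] at this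
    simp only [coeff_zero] at this
    exact (Finsupp.mem_support_iff.mp hp₀) this.symm
  set F : ℂ[X] := P * Qpoly a with hF
  have hFcard : 4 ≤ F.support.card := keyA a ha P hP0
  have hQbound : ∀ k : ℕ, (Qpoly a).coeff k ≠ 0 → k ≤ 3 := by
    intro k hk
    by_contra hc
    apply hk
    rw [Qpoly_coeff, if_neg (by omega), if_neg (by omega), if_neg (by omega), if_neg (by omega)]
  have hFsupp : ∀ e ∈ F.support, 2 ≤ e ∧ e ≤ σ + 1 ∧ e ≤ m + 1 ∧ σ + 2 ≤ e + n := by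
    intro e he
    rw [mem_support_iff] at he
    rw [hF, coeff_mul] at he
    obtain ⟨x, hx, hxne⟩ := Finset.exists_ne_zero_of_sum_ne_zero he
    rw [Finset.HasAntidiagonal.mem_antidiagonal] at hx
    have hP1 : P.coeff x.1 ≠ 0 := fun h => hxne (by rw [h, zero_mul])
    have hQ1 : (Qpoly a).coeff x.2 ≠ 0 := fun h => hxne (by rw [h, mul_zero])
    obtain ⟨p, hpT, hpk⟩ := hPsupp x.1 hP1
    obtain ⟨hps, hpσ⟩ := hTmem p hpT
    have hb := hl p hps
    have h3 := hQbound x.2 hQ1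
    omega
  -- entries of M
  have hlow : ∀ (r : Fin m) (c : Fin n), (r : ℕ) + (c : ℕ) + 1 < σ → M r c = 0 := by
    intro r c hrc
    rw [hMentry]
    apply Finset.sum_eq_zero
    intro p hp
    have hb := hl p hp
    have := hσle p hp
    show l p * Tgen m n a p.1 p.2 r c = 0
    rw [Tgen_low hb.1 hb.2.2.1 r c (by omega), mul_zero]
  have hdiag : ∀ (r : Fin m) (c : Fin n), (r : ℕ) + (c : ℕ) + 1 = σ →
      M r c = F.coeff ((r : ℕ) + 2) := by
    intro r c hrc
    rw [hMentry]
    rw [← Finset.sum_filter_add_sum_filter_not l.support (fun p => p.1 + p.2 = σ)]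
    have hzero : ∑ p ∈ l.support.filter (fun p => ¬ p.1 + p.2 = σ), l p * g p r c = 0 := by
      apply Finset.sum_eq_zero
      intro p hp
      rw [Finset.mem_filter] at hp
      have hb := hl p hp.1
      have := hσle p hp.1
      have hgt : σ < p.1 + p.2 := by
        rcases Nat.lt_or_ge σ (p.1 + p.2) with h | h
        · exact h
        · exact absurd (by omega : p.1 + p.2 = σ) hp.2
      show l p * Tgen m n a p.1 p.2 r c = 0
      rw [Tgen_low hb.1 hb.2.2.1 r c (by omega), mul_zero]
    rw [hzero, add_zero]
    have hFc : F.coeff ((r : ℕ) + 2) =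
        ∑ p ∈ T, l p * (if p.1 ≤ (r : ℕ) + 2 then (Qpoly a).coeff ((r : ℕ) + 2 - p.1) else 0) := by
      rw [hF, hP, Finset.sum_mul, finset_sum_coeff]
      apply Finset.sum_congr rfl
      intro p _
      rw [mul_assoc, coeff_C_mul, X_pow_mul, coeff_mul_X_pow']
    rw [hFc]
    apply Finset.sum_congr rfl
    intro p hp
    obtain ⟨hps, hpσ⟩ := hTmem p hp
    have hb := hl p hps
    show l p * Tgen m n a p.1 p.2 r c = _
    rw [Tgen_diag hb.1 hb.2.2.1 r c (by omega)]
  -- pick four support elements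
  obtain ⟨t, hts, ht4⟩ := Finset.exists_subset_card_eq hFcard
  set E : Fin 4 → ℕ := fun k => t.orderEmbOfFin ht4 k with hE
  have hEmem : ∀ k, E k ∈ F.support := fun k => hts (t.orderEmbOfFin_mem ht4 k)
  have hEb : ∀ k, 2 ≤ E k ∧ E k ≤ σ + 1 ∧ E k ≤ m + 1 ∧ σ + 2 ≤ E k + n :=
    fun k => hFsupp _ (hEmem k)
  have hEmono : StrictMono E := (t.orderEmbOfFin ht4).strictMono
  refine ⟨fun k => ⟨E k - 2, by have h := hEb k; omega⟩,
    fun k => ⟨σ + 1 - E k, by have h := hEb k; omega⟩, ?_⟩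
  apply det4_isUnit
  · intro k k' hkk
    rw [Matrix.submatrix_apply]
    apply hlow
    show E k - 2 + (σ + 1 - E k') + 1 < σ
    have h1 := hEb k
    have h2 := hEb k'
    have hlt : E k < E k' := hEmono hkk
    omega
  · intro k
    have h1 := hEb k
    rw [Matrix.submatrix_apply, hdiag _ _ (by show E k - 2 + (σ + 1 - E k) + 1 = σ; omega)]
    show F.coeff (E k - 2 + 2) ≠ 0
    rw [show E k - 2 + 2 = E k from by omega]
    exact mem_support_iff.mp (hEmem k)

theorem stmt18 (m n : ℕ) (hm : 4 ≤ m) (hn : 4 ≤ n) (a : ℝ) (ha : 4 < a) :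
    (∀ M ∈ Submodule.span ℂ {M : Matrix (Fin m) (Fin n) ℂ |
        ∃ i j : ℕ, 2 ≤ i ∧ i ≤ m - 2 ∧ 2 ≤ j ∧ j ≤ n - 2 ∧ M = Tgen m n a i j},
      M ≠ 0 → 4 ≤ M.rank) ∧
    Module.finrank ℂ (Submodule.span ℂ {M : Matrix (Fin m) (Fin n) ℂ |
        ∃ i j : ℕ, 2 ≤ i ∧ i ≤ m - 2 ∧ 2 ≤ j ∧ j ≤ n - 2 ∧ M = Tgen m n a i j}) =
      (m - 3) * (n - 3) := by
  classical
  set Sfin : Finset (ℕ × ℕ) := (Finset.Icc 2 (m - 2)) ×ˢ (Finset.Icc 2 (n - 2)) with hSfin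
  have hmemS : ∀ p : ℕ × ℕ, p ∈ Sfin ↔ 2 ≤ p.1 ∧ p.1 ≤ m - 2 ∧ 2 ≤ p.2 ∧ p.2 ≤ n - 2 := by
    intro p
    rw [hSfin, Finset.mem_product, Finset.mem_Icc, Finset.mem_Icc]
    tauto
  have hset : {M : Matrix (Fin m) (Fin n) ℂ |
        ∃ i j : ℕ, 2 ≤ i ∧ i ≤ m - 2 ∧ 2 ≤ j ∧ j ≤ n - 2 ∧ M = Tgen m n a i j} =
      (fun p : ℕ × ℕ => Tgen m n a p.1 p.2) '' ↑Sfin := by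
    ext M
    constructor
    · rintro ⟨i, j, h1, h2, h3, h4, rfl⟩
      exact ⟨(i, j), (hmemS (i, j)).mpr ⟨h1, h2, h3, h4⟩, rfl⟩
    · rintro ⟨⟨i, j⟩, hmem, rfl⟩
      have := (hmemS (i, j)).mp hmem
      exact ⟨i, j, this.1, this.2.1, this.2.2.1, this.2.2.2, rfl⟩
  constructor
  · intro M hM hM0
    rw [hset, Finsupp.mem_span_image_iff_linearCombination] at hM
    obtain ⟨l, hlsup, hMl⟩ := hM
    rw [Finsupp.mem_supported] at hlsup
    have hl : ∀ p ∈ l.support, 2 ≤ p.1 ∧ p.1 ≤ m - 2 ∧ 2 ≤ p.2 ∧ p.2 ≤ n - 2 := by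
      intro p hp
      exact (hmemS p).mp (hlsup hp)
    have hl0 : l ≠ 0 := by
      rintro rfl
      rw [map_zero] at hMl
      exact hM0 hMl.symm
    obtain ⟨v, w, hdet⟩ := core m n hm hn a ha l hl hl0
    rw [hMl] at hdet
    have h4 : (M.submatrix v w).rank = 4 := by
      rw [Matrix.rank_of_isUnit _ ((Matrix.isUnit_iff_isUnit_det _).mpr hdet)]
      simp
    have e1 : ((1 : Matrix (Fin m) (Fin m) ℂ).submatrix v (Equiv.refl (Fin m))) *
        (M * ((1 : Matrix (Fin n) (Fin n) ℂ).submatrix (Equiv.refl (Fin n)) w)) =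
        M.submatrix v w := by
      rw [Matrix.mul_submatrix_one, Matrix.one_submatrix_mul, Matrix.submatrix_submatrix]
      rfl
    have hle : (M.submatrix v w).rank ≤ M.rank := by
      rw [← e1]
      exact le_trans (Matrix.rank_mul_le_right _ _) (Matrix.rank_mul_le_left _ _)
    omega
  · have hli : LinearIndependent ℂ
        ((fun p : ℕ × ℕ => Tgen m n a p.1 p.2) ∘ (Subtype.val : ↥(↑Sfin : Set (ℕ × ℕ)) → ℕ × ℕ)) := by
      rw [linearIndependent_comp_subtype_iff, linearIndepOn_iff]
      intro l hls hl0
      by_contra hne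
      have hl : ∀ p ∈ l.support, 2 ≤ p.1 ∧ p.1 ≤ m - 2 ∧ 2 ≤ p.2 ∧ p.2 ≤ n - 2 := by
        intro p hp
        exact (hmemS p).mp ((Finsupp.mem_supported ℂ l).mp hls hp)
      obtain ⟨v, w, hdet⟩ := core m n hm hn a ha l hl hne
      rw [hl0] at hdet
      simp [Matrix.det_zero] at hdet
    have hrange : Set.range ((fun p : ℕ × ℕ => Tgen m n a p.1 p.2) ∘
        (Subtype.val : ↥(↑Sfin : Set (ℕ × ℕ)) → ℕ × ℕ)) =
        (fun p : ℕ × ℕ => Tgen m n a p.1 p.2) '' ↑Sfin := by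
      rw [Set.range_comp, Subtype.range_coe]
    rw [hset, ← hrange, finrank_span_eq_card hli]
    have hcard : Fintype.card ↥(↑Sfin : Set (ℕ × ℕ)) = Sfin.card := by
      exact Fintype.card_coe Sfin
    rw [hcard, hSfin, Finset.card_product, Nat.card_Icc, Nat.card_Icc]
    have h1 : m - 2 + 1 - 2 = m - 3 := by omega
    have h2 : n - 2 + 1 - 2 = n - 3 := by omega
    rw [h1, h2]
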